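/- Let G be a finite simple graph and let g, f : V(G) → ℕ be functions with g(x) ≤ f(x) for all x ∈ V(G). Then G has all fractional (g,f)-factors if and only if for every subset S ⊆ V(G), one has g(S) − f(T) + Σ_{x∈T} d_{G−S}(x) ≥ 0, where T = {v ∈ V(G) − S : d_{G−S}(v) < f(v)}, d_{G−S}(v) denotes the degree of v in the induced subgraph G − S, and g(S) = Σ_{v∈S} g(v), f(T) = Σ_{v∈T} f(v). -/

import Mathlib

open Finset

/-- The degree of `v` in the induced subgraph `G − S` (on `V(G) \ S`), i.e. the number of
neighbors of `v` in `G` that lie outside `S`. -/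
def dOut {V : Type*} [Fintype V] [DecidableEq V] (G : SimpleGraph V) [DecidableRel G.Adj]
    (S : Finset V) (v : V) : ℕ :=
  (G.neighborFinset v \ S).card

/-- `Tset G f S = {v ∈ V(G) − S : d_{G−S}(v) < f v}`. -/
def Tset {V : Type*} [Fintype V] [DecidableEq V] (G : SimpleGraph V) [DecidableRel G.Adj]
    (f : V → ℕ) (S : Finset V) : Finset V :=
  Sᶜ.filter fun v => dOut G S v < f v

/-- `h` is (the indicator function of) a fractional `(g,f)`-factor of `G`:
`0 ≤ h(e) ≤ 1` on every edge and `g x ≤ Σ_{e ∋ x} h e ≤ f x` for every vertex `x`. -/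
def IsFracFactor {V : Type*} [Fintype V] [DecidableEq V] (G : SimpleGraph V)
    [DecidableRel G.Adj] (g f : V → ℕ) (h : Sym2 V → ℝ) : Prop :=
  (∀ e ∈ G.edgeFinset, 0 ≤ h e ∧ h e ≤ 1) ∧
  ∀ x : V, (g x : ℝ) ≤ ∑ e ∈ G.incidenceFinset x, h e ∧
    ∑ e ∈ G.incidenceFinset x, h e ≤ (f x : ℝ)

/-- `G` has all fractional `(g,f)`-factors: for every `q : V → ℕ` with `g ≤ q ≤ f`
pointwise, `G` has a fractional `q`-factor (a fractional `(q,q)`-factor). -/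
def HasAllFracFactors {V : Type*} [Fintype V] [DecidableEq V] (G : SimpleGraph V)
    [DecidableRel G.Adj] (g f : V → ℕ) : Prop :=
  ∀ q : V → ℕ, (∀ v, g v ≤ q v) → (∀ v, q v ≤ f v) → ∃ h, IsFracFactor G q q h

section Aux

variable {V : Type*} [Fintype V] [DecidableEq V] (G : SimpleGraph V) [DecidableRel G.Adj]

lemma double_count (X Y : Finset V) :
    ∑ v ∈ X, (G.neighborFinset v ∩ Y).card = ∑ u ∈ Y, (G.neighborFinset u ∩ X).card := by
  have h : ∀ (X Y : Finset V), ∑ v ∈ X, (G.neighborFinset v ∩ Y).card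
      = ∑ v ∈ X, ∑ u ∈ Y, if G.Adj v u then 1 else 0 := by
    intro X Y
    refine Finset.sum_congr rfl fun v _ => ?_
    rw [Finset.inter_comm, ← Finset.filter_mem_eq_inter]
    rw [Finset.card_filter]
    refine Finset.sum_congr rfl fun u _ => ?_
    simp [SimpleGraph.mem_neighborFinset]
  rw [h, h, Finset.sum_comm]
  refine Finset.sum_congr rfl fun u _ => Finset.sum_congr rfl fun v _ => by
    simp [SimpleGraph.adj_comm]

lemma dOut_sdiff {B W : Finset V} (hBW : B ⊆ W) (v : V) :
    dOut G (W \ B) v = dOut G W v + (G.neighborFinset v ∩ B).card := by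
  unfold dOut
  rw [← Finset.card_union_of_disjoint]
  · congr 1
    ext u
    simp only [Finset.mem_union, Finset.mem_sdiff, Finset.mem_inter]
    constructor
    · rintro ⟨hN, hW⟩
      by_cases hB : u ∈ B
      · exact Or.inr ⟨hN, hB⟩
      · exact Or.inl ⟨hN, fun h => hW ⟨h, hB⟩⟩
    · rintro (⟨hN, hW⟩ | ⟨hN, hB⟩)
      · exact ⟨hN, fun h => hW h.1⟩
      · exact ⟨hN, fun h => h.2 hB⟩
  · exact Finset.disjoint_left.2 fun u hu h2 =>
      (Finset.mem_sdiff.1 hu).2 (hBW (Finset.mem_inter.1 h2).2)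

lemma dOut_add_inter (W : Finset V) (v : V) :
    dOut G W v + (G.neighborFinset v ∩ W).card = G.degree v := by
  unfold dOut
  rw [Finset.card_sdiff_add_card_inter]
  rfl

lemma dOut_mono {W' W : Finset V} (h : W' ⊆ W) (v : V) : dOut G W v ≤ dOut G W' v :=
  Finset.card_le_card (Finset.sdiff_subset_sdiff le_rfl h)

variable (q : V → ℕ)

/-- The Anstee-type condition restricted to `T ⊆ Sᶜ`. -/
def CondA : Prop :=
  ∀ S : Finset V,
    ∑ v ∈ Sᶜ.filter (fun v => dOut G S v < q v), ((q v : ℤ) - dOut G S v) ≤ ∑ v ∈ S, (q v : ℤ)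

lemma full_of_condA (hA : CondA G q) (W : Finset V) :
    ∑ v ∈ univ.filter (fun v => dOut G W v < q v), ((q v : ℤ) - dOut G W v)
      ≤ ∑ v ∈ W, (q v : ℤ) := by
  classical
  set B := W.filter (fun u => dOut G W u < q u) with hB
  set W' := W \ B with hW'
  have hBW : B ⊆ W := Finset.filter_subset _ _
  have hW'W : W' ⊆ W := Finset.sdiff_subset
  set D := univ.filter (fun v => dOut G W v < q v) with hD
  set D' := univ.filter (fun v => dOut G W' v < q v) with hD'
  have hBD : B ⊆ D := fun v hv => by
    simp only [hD, Finset.mem_filter, Finset.mem_univ, true_and]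
    exact (Finset.mem_filter.1 hv).2
  have hnotW : ∀ v ∈ D \ B, v ∉ W := by
    intro v hv
    obtain ⟨hvD, hvB⟩ := Finset.mem_sdiff.1 hv
    intro hvW
    exact hvB (Finset.mem_filter.2 ⟨hvW, (Finset.mem_filter.1 hvD).2⟩)
  -- hA applied to W'
  have hAW' : ∑ v ∈ D', ((q v : ℤ) - dOut G W' v) ≤ ∑ v ∈ W', (q v : ℤ) := by
    have hset : D' = W'ᶜ.filter (fun v => dOut G W' v < q v) := by
      ext v
      simp only [hD', Finset.mem_filter, Finset.mem_univ, true_and, Finset.mem_compl]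
      constructor
      · intro hv
        refine ⟨fun hvW' => ?_, hv⟩
        have h1 : q v ≤ dOut G W v := by
          by_contra hlt
          push_neg at hlt
          exact (Finset.mem_sdiff.1 hvW').2 (Finset.mem_filter.2 ⟨(Finset.mem_sdiff.1 hvW').1, hlt⟩)
        exact absurd (lt_of_le_of_lt (le_trans h1 (dOut_mono G hW'W v)) hv) (lt_irrefl _)
      · exact fun h => h.2
    rw [hset]
    exact hA W'
  have hsplit : ∑ v ∈ D, ((q v : ℤ) - dOut G W v)
      = ∑ v ∈ D \ B, ((q v : ℤ) - dOut G W v) + ∑ v ∈ B, ((q v : ℤ) - dOut G W v) :=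
    (Finset.sum_sdiff hBD).symm
  -- bound on D \ B part
  have hDB : ∑ v ∈ D \ B, ((q v : ℤ) - dOut G W v)
      ≤ ∑ v ∈ D', ((q v : ℤ) - dOut G W' v) + ∑ v ∈ B, (dOut G W v : ℤ) := by
    have e1 : ∀ v ∈ D \ B, ((q v : ℤ) - dOut G W v)
        = ((q v : ℤ) - dOut G W' v) + ((G.neighborFinset v ∩ B).card : ℤ) := by
      intro v _
      rw [dOut_sdiff G hBW v]
      push_cast
      ring
    rw [Finset.sum_congr rfl e1, Finset.sum_add_distrib]
    have h2 : ∑ v ∈ D \ B, ((q v : ℤ) - dOut G W' v) ≤ ∑ v ∈ D', ((q v : ℤ) - dOut G W' v) := by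
      rw [← Finset.sum_filter_add_sum_filter_not (D \ B) (fun v => dOut G W' v < q v)]
      have h3 : ∑ v ∈ (D \ B).filter (fun v => ¬ dOut G W' v < q v),
          ((q v : ℤ) - dOut G W' v) ≤ 0 := by
        refine Finset.sum_nonpos fun v hv => ?_
        have := (Finset.mem_filter.1 hv).2
        push_neg at this
        omega
      have h4 : ∑ v ∈ (D \ B).filter (fun v => dOut G W' v < q v),
          ((q v : ℤ) - dOut G W' v) ≤ ∑ v ∈ D', ((q v : ℤ) - dOut G W' v) := by
        refine Finset.sum_le_sum_of_subset_of_nonneg ?_ ?_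
        · intro v hv
          simp only [hD', Finset.mem_filter, Finset.mem_univ, true_and]
          exact (Finset.mem_filter.1 hv).2
        · intro v hv _
          have := (Finset.mem_filter.1 hv).2
          omega
      linarith
    have h5 : ∑ v ∈ D \ B, ((G.neighborFinset v ∩ B).card : ℤ) ≤ ∑ v ∈ B, (dOut G W v : ℤ) := by
      have h6 : ∑ v ∈ D \ B, (G.neighborFinset v ∩ B).card
          = ∑ u ∈ B, (G.neighborFinset u ∩ (D \ B)).card := double_count G _ _
      have h7 : ∀ u ∈ B, (G.neighborFinset u ∩ (D \ B)).card ≤ dOut G W u := by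
        intro u _
        refine Finset.card_le_card fun v hv => ?_
        obtain ⟨hN, hDB'⟩ := Finset.mem_inter.1 hv
        exact Finset.mem_sdiff.2 ⟨hN, hnotW v hDB'⟩
      calc ∑ v ∈ D \ B, ((G.neighborFinset v ∩ B).card : ℤ)
          = ((∑ v ∈ D \ B, (G.neighborFinset v ∩ B).card : ℕ) : ℤ) := by push_cast; rfl
        _ = ((∑ u ∈ B, (G.neighborFinset u ∩ (D \ B)).card : ℕ) : ℤ) := by rw [h6]
        _ ≤ ∑ u ∈ B, (dOut G W u : ℤ) := by
            push_cast
            exact Finset.sum_le_sum fun u hu => by exact_mod_cast h7 u hu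
    linarith
  have hBsum : ∑ v ∈ B, ((q v : ℤ) - dOut G W v) + ∑ v ∈ B, (dOut G W v : ℤ)
      = ∑ v ∈ B, (q v : ℤ) := by
    rw [← Finset.sum_add_distrib]
    exact Finset.sum_congr rfl fun v _ => by ring
  have hWsum : ∑ v ∈ W', (q v : ℤ) + ∑ v ∈ B, (q v : ℤ) = ∑ v ∈ W, (q v : ℤ) :=
    Finset.sum_sdiff hBW
  linarith

lemma condC_of_condA (hA : CondA G q) (U W : Finset V) :
    ∑ v ∈ U, (q v : ℤ) ≤ ∑ v ∈ W, (q v : ℤ) + ∑ v ∈ U, (dOut G W v : ℤ) := by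
  classical
  have h1 : ∑ v ∈ U, ((q v : ℤ) - dOut G W v) ≤ ∑ v ∈ W, (q v : ℤ) := by
    calc ∑ v ∈ U, ((q v : ℤ) - dOut G W v)
        ≤ ∑ v ∈ U.filter (fun v => dOut G W v < q v), ((q v : ℤ) - dOut G W v) := by
          rw [← Finset.sum_filter_add_sum_filter_not U (fun v => dOut G W v < q v)]
          have : ∑ v ∈ U.filter (fun v => ¬ dOut G W v < q v), ((q v : ℤ) - dOut G W v) ≤ 0 :=
            Finset.sum_nonpos fun v hv => by
              have := (Finset.mem_filter.1 hv).2; push_neg at this; omega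
          linarith
      _ ≤ ∑ v ∈ univ.filter (fun v => dOut G W v < q v), ((q v : ℤ) - dOut G W v) := by
          refine Finset.sum_le_sum_of_subset_of_nonneg ?_ ?_
          · intro v hv
            simp only [Finset.mem_filter, Finset.mem_univ, true_and]
            exact (Finset.mem_filter.1 hv).2
          · intro v hv _
            have := (Finset.mem_filter.1 hv).2; omega
      _ ≤ ∑ v ∈ W, (q v : ℤ) := full_of_condA G q hA W
  have h2 : ∑ v ∈ U, ((q v : ℤ) - dOut G W v)
      = ∑ v ∈ U, (q v : ℤ) - ∑ v ∈ U, (dOut G W v : ℤ) := Finset.sum_sub_distrib _ _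
  linarith

lemma incidenceFinset_eq_image (x : V) :
    G.incidenceFinset x = (G.neighborFinset x).image (fun w => s(x, w)) := by
  ext e
  rw [SimpleGraph.mem_incidenceFinset]
  refine Sym2.ind (fun a b => ?_) e
  rw [SimpleGraph.mk'_mem_incidenceSet_iff]
  simp only [Finset.mem_image, SimpleGraph.mem_neighborFinset]
  constructor
  · rintro ⟨hab, (rfl | rfl)⟩
    · exact ⟨b, hab, rfl⟩
    · exact ⟨a, hab.symm, Sym2.eq_swap⟩
  · rintro ⟨w, hw, he⟩
    rcases Sym2.eq_iff.1 he with ⟨h1, h2⟩ | ⟨h1, h2⟩ <;> subst h1 <;> subst h2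
    · exact ⟨hw, Or.inl rfl⟩
    · exact ⟨hw.symm, Or.inr rfl⟩

lemma sum_incidence (h : Sym2 V → ℝ) (x : V) :
    ∑ e ∈ G.incidenceFinset x, h e = ∑ w ∈ G.neighborFinset x, h s(x, w) := by
  rw [incidenceFinset_eq_image G x]
  refine Finset.sum_image fun w hw w' hw' hww' => ?_
  exact Sym2.congr_right.1 hww'

/-- Count of directed edges with tail in `U` and head in `W`. -/
lemma card_tail_head (U W : Finset V) :
    (univ.filter (fun e : {p : V × V // G.Adj p.1 p.2} => e.1.1 ∈ U ∧ e.1.2 ∈ W)).card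
      = ∑ v ∈ U, (G.neighborFinset v ∩ W).card := by
  classical
  rw [← Finset.card_sigma U (fun v => G.neighborFinset v ∩ W)]
  refine Finset.card_bij' (fun e he => ⟨e.1.1, e.1.2⟩)
    (fun s hs => ⟨(s.1, s.2), ?_⟩) ?_ ?_ ?_ ?_
  · have := (Finset.mem_sigma.1 hs).2
    exact (SimpleGraph.mem_neighborFinset _ _ _).1 (Finset.mem_inter.1 this).1
  · intro e he
    obtain ⟨h1, h2⟩ := (Finset.mem_filter.1 he).2
    exact Finset.mem_sigma.2 ⟨h1, Finset.mem_inter.2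
      ⟨(SimpleGraph.mem_neighborFinset _ _ _).2 e.2, h2⟩⟩
  · intro s hs
    refine Finset.mem_filter.2 ⟨Finset.mem_univ _, (Finset.mem_sigma.1 hs).1,
      (Finset.mem_inter.1 (Finset.mem_sigma.1 hs).2).2⟩
  · intro e he; rfl
  · intro s hs; rfl

/-- Gadget bipartite neighborhoods for Hall's theorem. Index/value type:
left-slots plus `b`-nodes map to right-slots plus `a`-nodes (one `a` and one `b`
node per directed edge). -/
def nbhd : (Σ v : V, Fin (q v)) ⊕ {p : V × V // G.Adj p.1 p.2} →
    Finset ((Σ v : V, Fin (q v)) ⊕ {p : V × V // G.Adj p.1 p.2})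
  | Sum.inl s => (univ.filter (fun e : {p : V × V // G.Adj p.1 p.2} => e.1.1 = s.1)).image Sum.inr
  | Sum.inr e => insert (Sum.inr e)
      ((univ : Finset (Fin (q e.1.2))).image (fun k => Sum.inl ⟨e.1.2, k⟩))

lemma hall_cond
    (hC : ∀ U W : Finset V,
      ∑ v ∈ U, (q v : ℤ) ≤ ∑ v ∈ W, (q v : ℤ) + ∑ v ∈ U, (dOut G W v : ℤ))
    (A : Finset ((Σ v : V, Fin (q v)) ⊕ {p : V × V // G.Adj p.1 p.2})) :
    A.card ≤ (A.biUnion (nbhd G q)).card := by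
  classical
  let DE := {p : V × V // G.Adj p.1 p.2}
  set P := A.toLeft with hP
  set Bs := A.toRight with hBs
  set U := P.image Sigma.fst with hU
  set W := Bs.image (fun e => e.1.2) with hW
  set EU := univ.filter (fun e : DE => e.1.1 ∈ U) with hEU
  -- |P| ≤ ∑_{v∈U} q v
  have hPcard : P.card ≤ ∑ v ∈ U, q v := by
    have hsub : P ⊆ U.sigma (fun v => (univ : Finset (Fin (q v)))) := fun s hs =>
      Finset.mem_sigma.2 ⟨Finset.mem_image_of_mem _ hs, Finset.mem_univ _⟩
    calc P.card ≤ _ := Finset.card_le_card hsub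
      _ = ∑ v ∈ U, q v := by
          rw [Finset.card_sigma]
          exact Finset.sum_congr rfl fun v _ => by simp
  -- the visible part of the neighborhood
  have hsub : ((EU ∪ Bs).image Sum.inr) ∪
      ((W.sigma fun v => (univ : Finset (Fin (q v)))).image Sum.inl) ⊆ A.biUnion (nbhd G q) := by
    intro x hx
    rcases Finset.mem_union.1 hx with hx | hx
    · obtain ⟨e, he, rfl⟩ := Finset.mem_image.1 hx
      rcases Finset.mem_union.1 he with he | he
      · have htail : e.1.1 ∈ U := (Finset.mem_filter.1 he).2
        obtain ⟨s, hsP, hs1⟩ := Finset.mem_image.1 htail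
        refine Finset.mem_biUnion.2 ⟨Sum.inl s, Finset.mem_toLeft.1 hsP, ?_⟩
        show _ ∈ nbhd G q (Sum.inl s)
        simp only [nbhd, Finset.mem_image]
        exact ⟨e, Finset.mem_filter.2 ⟨Finset.mem_univ _, hs1.symm ▸ rfl⟩, rfl⟩
      · refine Finset.mem_biUnion.2 ⟨Sum.inr e, Finset.mem_toRight.1 he, ?_⟩
        show _ ∈ nbhd G q (Sum.inr e)
        simp [nbhd]
    · obtain ⟨s, hsW, rfl⟩ := Finset.mem_image.1 hx
      obtain ⟨v, k⟩ := s
      obtain ⟨hv, -⟩ := Finset.mem_sigma.1 hsW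
      obtain ⟨e, heBs, hev⟩ := Finset.mem_image.1 hv
      refine Finset.mem_biUnion.2 ⟨Sum.inr e, Finset.mem_toRight.1 heBs, ?_⟩
      show _ ∈ nbhd G q (Sum.inr e)
      simp only [nbhd, Finset.mem_insert, Finset.mem_image]
      subst hev
      exact Or.inr ⟨k, Finset.mem_univ _, rfl⟩
  have hNcard : (EU ∪ Bs).card + ∑ v ∈ W, q v ≤ (A.biUnion (nbhd G q)).card := by
    have hdisj : Disjoint ((EU ∪ Bs).image (Sum.inr : DE → _))
        ((W.sigma fun v => (univ : Finset (Fin (q v)))).image Sum.inl) := by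
      refine Finset.disjoint_left.2 fun x hx1 hx2 => ?_
      obtain ⟨e, -, rfl⟩ := Finset.mem_image.1 hx1
      obtain ⟨s, -, hs⟩ := Finset.mem_image.1 hx2
      exact Sum.inl_ne_inr hs
    calc (EU ∪ Bs).card + ∑ v ∈ W, q v
        = (((EU ∪ Bs).image Sum.inr) ∪
            ((W.sigma fun v => (univ : Finset (Fin (q v)))).image Sum.inl)).card := by
          rw [Finset.card_union_of_disjoint hdisj,
            Finset.card_image_of_injective _ Sum.inr_injective,
            Finset.card_image_of_injective _ Sum.inl_injective, Finset.card_sigma]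
          congr 1
          exact Finset.sum_congr rfl fun v _ => by simp
      _ ≤ _ := Finset.card_le_card hsub
  -- arithmetic
  have hBsplit : Bs.card = (Bs ∩ EU).card + (Bs \ EU).card :=
    (Finset.card_inter_add_card_sdiff _ _).symm
  have hUnion : (EU ∪ Bs).card = EU.card + (Bs \ EU).card := by
    rw [← Finset.union_sdiff_self_eq_union, Finset.card_union_of_disjoint Finset.disjoint_sdiff]
  have hEUcard : EU.card = ∑ v ∈ U, G.degree v := by
    have : EU = univ.filter (fun e : DE => e.1.1 ∈ U ∧ e.1.2 ∈ (univ : Finset V)) := by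
      simp [hEU]
    rw [this, card_tail_head G U univ]
    exact Finset.sum_congr rfl fun v _ => by
      rw [Finset.inter_univ]
      rfl
  have hBsEU : (Bs ∩ EU).card ≤ ∑ v ∈ U, (G.neighborFinset v ∩ W).card := by
    rw [← card_tail_head G U W]
    refine Finset.card_le_card fun e he => ?_
    obtain ⟨heBs, heEU⟩ := Finset.mem_inter.1 he
    exact Finset.mem_filter.2 ⟨Finset.mem_univ _,
      (Finset.mem_filter.1 heEU).2, Finset.mem_image_of_mem _ heBs⟩
  -- the key inequality over ℤ
  have hkey : (∑ v ∈ U, (q v : ℤ)) + ∑ v ∈ U, ((G.neighborFinset v ∩ W).card : ℤ)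
      ≤ (∑ v ∈ U, (G.degree v : ℤ)) + ∑ v ∈ W, (q v : ℤ) := by
    have h1 := hC U W
    have h2 : ∀ v ∈ U, (dOut G W v : ℤ) + ((G.neighborFinset v ∩ W).card : ℤ)
        = (G.degree v : ℤ) := fun v _ => by exact_mod_cast dOut_add_inter G W v
    have h3 : ∑ v ∈ U, ((dOut G W v : ℤ) + ((G.neighborFinset v ∩ W).card : ℤ))
        = ∑ v ∈ U, (G.degree v : ℤ) := Finset.sum_congr rfl h2
    rw [Finset.sum_add_distrib] at h3
    linarith
  have hfinal : P.card + (Bs ∩ EU).card ≤ EU.card + ∑ v ∈ W, q v := by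
    have : (P.card : ℤ) + ((Bs ∩ EU).card : ℤ) ≤ (EU.card : ℤ) + ∑ v ∈ W, (q v : ℤ) := by
      have c1 : (P.card : ℤ) ≤ ∑ v ∈ U, (q v : ℤ) := by exact_mod_cast hPcard
      have c2 : ((Bs ∩ EU).card : ℤ) ≤ ∑ v ∈ U, ((G.neighborFinset v ∩ W).card : ℤ) := by
        exact_mod_cast hBsEU
      have c3 : (EU.card : ℤ) = ∑ v ∈ U, (G.degree v : ℤ) := by exact_mod_cast hEUcard
      rw [c3]
      linarith
    exact_mod_cast this
  calc A.card = P.card + Bs.card := (Finset.card_toLeft_add_card_toRight).symm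
    _ = P.card + ((Bs ∩ EU).card + (Bs \ EU).card) := by rw [hBsplit]
    _ ≤ (EU.card + ∑ v ∈ W, q v) + (Bs \ EU).card := by omega
    _ = (EU.card + (Bs \ EU).card) + ∑ v ∈ W, q v := by ring
    _ = (EU ∪ Bs).card + ∑ v ∈ W, q v := by rw [hUnion]
    _ ≤ _ := hNcard

lemma exists_factor_of_condC
    (hC : ∀ U W : Finset V,
      ∑ v ∈ U, (q v : ℤ) ≤ ∑ v ∈ W, (q v : ℤ) + ∑ v ∈ U, (dOut G W v : ℤ)) :
    ∃ h : Sym2 V → ℝ, IsFracFactor G q q h := by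
  classical
  obtain ⟨F, Finj, hF⟩ :=
    (Finset.all_card_le_biUnion_card_iff_exists_injective (nbhd G q)).mp (hall_cond G q hC)
  have Fbij : Function.Bijective F := Finite.injective_iff_bijective.mp Finj
  set usedP : V → V → Prop := fun a b =>
    ∃ hab : G.Adj a b, F (Sum.inr ⟨(a, b), hab⟩) ≠ Sum.inr ⟨(a, b), hab⟩ with husedP
  have husedDE : ∀ e : {p : V × V // G.Adj p.1 p.2},
      usedP e.1.1 e.1.2 ↔ F (Sum.inr e) ≠ Sum.inr e := by
    rintro ⟨⟨a, b⟩, hab⟩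
    constructor
    · rintro ⟨h', hne⟩; exact hne
    · intro hne; exact ⟨hab, hne⟩
  set RS : V → Finset ((Σ v : V, Fin (q v)) ⊕ {p : V × V // G.Adj p.1 p.2}) := fun v =>
    (univ : Finset (Fin (q v))).image (fun k => Sum.inl ⟨v, k⟩) with hRS
  have hRScard : ∀ v, (RS v).card = q v := fun v => by
    rw [hRS]
    have hinj : Function.Injective (fun k : Fin (q v) =>
        (Sum.inl ⟨v, k⟩ : (Σ u : V, Fin (q u)) ⊕ {p : V × V // G.Adj p.1 p.2})) := by
      intro k k' h
      simpa using h
    rw [Finset.card_image_of_injective _ hinj, Finset.card_univ, Fintype.card_fin]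
  set OutE : V → Finset {p : V × V // G.Adj p.1 p.2} := fun v =>
    univ.filter (fun e => e.1.1 = v ∧ usedP e.1.1 e.1.2) with hOutE
  set InE : V → Finset {p : V × V // G.Adj p.1 p.2} := fun v =>
    univ.filter (fun e => e.1.2 = v ∧ usedP e.1.1 e.1.2) with hInE
  -- |InE v| = q v
  have hIn : ∀ v, (InE v).card = q v := by
    intro v
    have hPre : univ.filter (fun i => F i ∈ RS v) = (InE v).image Sum.inr := by
      ext i
      simp only [Finset.mem_filter, Finset.mem_univ, true_and, Finset.mem_image]
      cases i with
      | inl s =>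
        constructor
        · intro hFi
          exfalso
          have h1 := hF (Sum.inl s)
          simp only [nbhd, Finset.mem_image] at h1
          obtain ⟨e, -, he⟩ := h1
          rw [← he] at hFi
          rw [hRS] at hFi
          obtain ⟨k, -, hk⟩ := Finset.mem_image.1 hFi
          exact Sum.inl_ne_inr hk
        · rintro ⟨e, -, he⟩
          exact absurd he (Sum.inr_ne_inl)
      | inr e =>
        constructor
        · intro hFi
          rw [hRS] at hFi
          obtain ⟨k, -, hk⟩ := Finset.mem_image.1 hFi
          have hused : F (Sum.inr e) ≠ Sum.inr e := fun hh => Sum.inl_ne_inr (hk.trans hh)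
          have h1 := hF (Sum.inr e)
          simp only [nbhd, Finset.mem_insert, Finset.mem_image] at h1
          rcases h1 with h1 | ⟨k', -, hk'⟩
          · exact absurd h1 hused
          · have hsig : (⟨e.1.2, k'⟩ : Σ v : V, Fin (q v)) = ⟨v, k⟩ :=
              Sum.inl_injective (hk'.trans hk.symm)
            have hv2 : e.1.2 = v := congrArg Sigma.fst hsig
            exact ⟨e, Finset.mem_filter.2 ⟨Finset.mem_univ _, hv2, (husedDE e).2 hused⟩, rfl⟩
        · rintro ⟨e', he', heq⟩
          have he'e : e' = e := Sum.inr_injective heq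
          subst he'e
          obtain ⟨hv2, hu⟩ := (Finset.mem_filter.1 he').2
          have hused := (husedDE e').1 hu
          have h1 := hF (Sum.inr e')
          simp only [nbhd, Finset.mem_insert, Finset.mem_image] at h1
          rcases h1 with h1 | ⟨k', -, hk'⟩
          · exact absurd h1 hused
          · subst hv2
            rw [hRS]
            exact Finset.mem_image.2 ⟨k', Finset.mem_univ _, hk'⟩
    have hPreCard : (univ.filter (fun i => F i ∈ RS v)).card = (RS v).card := by
      refine Finset.card_bij (fun i _ => F i) (fun i hi => (Finset.mem_filter.1 hi).2)
        (fun i1 h1 i2 h2 h => Finj h) (fun b hb => ?_)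
      obtain ⟨i, hi⟩ := Fbij.2 b
      exact ⟨i, Finset.mem_filter.2 ⟨Finset.mem_univ _, hi ▸ hb⟩, hi⟩
    calc (InE v).card = ((InE v).image Sum.inr).card :=
          (Finset.card_image_of_injective _ Sum.inr_injective).symm
      _ = (univ.filter (fun i => F i ∈ RS v)).card := by rw [hPre]
      _ = (RS v).card := hPreCard
      _ = q v := hRScard v
  -- q v ≤ |OutE v|
  have hOutGe : ∀ v, q v ≤ (OutE v).card := by
    intro v
    have himg : (RS v).image F ⊆ (OutE v).image Sum.inr := by
      intro x hx
      obtain ⟨i, hi, rfl⟩ := Finset.mem_image.1 hx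
      rw [hRS] at hi
      obtain ⟨k, -, rfl⟩ := Finset.mem_image.1 hi
      have h1 := hF (Sum.inl ⟨v, k⟩)
      simp only [nbhd, Finset.mem_image] at h1
      obtain ⟨e, hef, he⟩ := h1
      have htail : e.1.1 = v := (Finset.mem_filter.1 hef).2
      have hused : F (Sum.inr e) ≠ Sum.inr e := fun hh =>
        Sum.inr_ne_inl (Finj (hh.trans he) : Sum.inr e = Sum.inl ⟨v, k⟩)
      rw [← he]
      exact Finset.mem_image_of_mem _
        (Finset.mem_filter.2 ⟨Finset.mem_univ _, htail, (husedDE e).2 hused⟩)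
    calc q v = (RS v).card := (hRScard v).symm
      _ = ((RS v).image F).card := (Finset.card_image_of_injective _ Finj).symm
      _ ≤ ((OutE v).image Sum.inr).card := Finset.card_le_card himg
      _ = (OutE v).card := Finset.card_image_of_injective _ Sum.inr_injective
  -- sums agree
  have hOutSum : (univ.filter (fun e : {p : V × V // G.Adj p.1 p.2} =>
      usedP e.1.1 e.1.2)).card = ∑ v : V, (OutE v).card := by
    rw [Finset.card_eq_sum_card_fiberwise
      (f := fun e : {p : V × V // G.Adj p.1 p.2} => e.1.1) (fun e _ => Finset.mem_univ _)]
    refine Finset.sum_congr rfl fun v _ => ?_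
    rw [Finset.filter_filter, hOutE]
    congr 1
    ext e
    simp only [Finset.mem_filter, Finset.mem_univ, true_and]
    exact and_comm
  have hInSum : (univ.filter (fun e : {p : V × V // G.Adj p.1 p.2} =>
      usedP e.1.1 e.1.2)).card = ∑ v : V, (InE v).card := by
    rw [Finset.card_eq_sum_card_fiberwise
      (f := fun e : {p : V × V // G.Adj p.1 p.2} => e.1.2) (fun e _ => Finset.mem_univ _)]
    refine Finset.sum_congr rfl fun v _ => ?_
    rw [Finset.filter_filter, hInE]
    congr 1
    ext e
    simp only [Finset.mem_filter, Finset.mem_univ, true_and]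
    exact and_comm
  have hOut : ∀ v, (OutE v).card = q v := by
    have heq : ∑ v : V, q v = ∑ v : V, (OutE v).card := by
      rw [← hOutSum, hInSum]
      exact Finset.sum_congr rfl fun v _ => (hIn v).symm
    intro v
    exact ((Finset.sum_eq_sum_iff_of_le (fun i _ => hOutGe i)).1 heq v (Finset.mem_univ v)).symm
  -- build the fractional factor
  have hsym : ∀ a b : V,
      ((if usedP a b then (1 : ℝ) else 0) + (if usedP b a then (1 : ℝ) else 0)) / 2
        = ((if usedP b a then (1 : ℝ) else 0) + (if usedP a b then (1 : ℝ) else 0)) / 2 :=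
    fun a b => by rw [add_comm]
  refine ⟨Sym2.lift ⟨fun a b =>
    ((if usedP a b then (1 : ℝ) else 0) + (if usedP b a then (1 : ℝ) else 0)) / 2, hsym⟩, ?_, ?_⟩
  · intro e he
    revert he
    refine Sym2.ind (fun a b he => ?_) e
    have hv : Sym2.lift ⟨fun a b =>
        ((if usedP a b then (1 : ℝ) else 0) + (if usedP b a then (1 : ℝ) else 0)) / 2, hsym⟩ s(a, b)
        = ((if usedP a b then (1 : ℝ) else 0) + (if usedP b a then (1 : ℝ) else 0)) / 2 := by
      rw [Sym2.lift_mk]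
    rw [hv]
    constructor <;> split_ifs <;> norm_num
  · intro x
    have hdeg : ∑ e ∈ G.incidenceFinset x, Sym2.lift ⟨fun a b =>
        ((if usedP a b then (1 : ℝ) else 0) + (if usedP b a then (1 : ℝ) else 0)) / 2,
        hsym⟩ e = (q x : ℝ) := by
      rw [sum_incidence G]
      have h1 : ∀ w ∈ G.neighborFinset x, Sym2.lift ⟨fun a b =>
          ((if usedP a b then (1 : ℝ) else 0) + (if usedP b a then (1 : ℝ) else 0)) / 2,
          hsym⟩ s(x, w)
          = ((if usedP x w then (1 : ℝ) else 0) + (if usedP w x then (1 : ℝ) else 0)) / 2 :=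
        fun w _ => by rw [Sym2.lift_mk]
      rw [Finset.sum_congr rfl h1, ← Finset.sum_div, Finset.sum_add_distrib,
        Finset.sum_boole, Finset.sum_boole]
      have hcardOut : ((G.neighborFinset x).filter (fun w => usedP x w)).card
          = (OutE x).card := by
        refine Finset.card_bij' (fun w hw => (⟨(x, w), ?_⟩ : {p : V × V // G.Adj p.1 p.2}))
          (fun e he => e.1.2) ?_ ?_ ?_ ?_
        · exact (SimpleGraph.mem_neighborFinset _ _ _).1 (Finset.mem_filter.1 hw).1
        · intro w hw
          exact Finset.mem_filter.2 ⟨Finset.mem_univ _, rfl, (Finset.mem_filter.1 hw).2⟩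
        · intro e he
          obtain ⟨htail, hu⟩ := (Finset.mem_filter.1 he).2
          refine Finset.mem_filter.2 ⟨(SimpleGraph.mem_neighborFinset _ _ _).2 ?_, ?_⟩
          · exact htail ▸ e.2
          · exact htail ▸ hu
        · intro w hw; rfl
        · rintro ⟨⟨a, b⟩, hab⟩ he
          obtain ⟨htail, -⟩ := (Finset.mem_filter.1 he).2
          simp only at htail
          subst htail
          rfl
      have hcardIn : ((G.neighborFinset x).filter (fun w => usedP w x)).card
          = (InE x).card := by
        refine Finset.card_bij' (fun w hw => (⟨(w, x), ?_⟩ : {p : V × V // G.Adj p.1 p.2}))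
          (fun e he => e.1.1) ?_ ?_ ?_ ?_
        · exact ((SimpleGraph.mem_neighborFinset _ _ _).1 (Finset.mem_filter.1 hw).1).symm
        · intro w hw
          exact Finset.mem_filter.2 ⟨Finset.mem_univ _, rfl, (Finset.mem_filter.1 hw).2⟩
        · intro e he
          obtain ⟨hhead, hu⟩ := (Finset.mem_filter.1 he).2
          refine Finset.mem_filter.2 ⟨(SimpleGraph.mem_neighborFinset _ _ _).2 ?_, ?_⟩
          · exact (hhead ▸ e.2).symm
          · exact hhead ▸ hu
        · intro w hw; rfl
        · rintro ⟨⟨a, b⟩, hab⟩ he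
          obtain ⟨hhead, -⟩ := (Finset.mem_filter.1 he).2
          simp only at hhead
          subst hhead
          rfl
      rw [hcardOut, hcardIn, hOut x, hIn x]
      ring
    exact ⟨le_of_eq hdeg.symm, le_of_eq hdeg⟩


end Aux

set_option maxHeartbeats 2000000

/-- **Theorem 5 (Lu).** `G` has all fractional `(g,f)`-factors iff for every `S ⊆ V(G)`,
`g(S) − f(T) + Σ_{x∈T} d_{G−S}(x) ≥ 0`, where `T = {v ∈ V(G)−S : d_{G−S}(v) < f v}`. -/
theorem all_fractional_gf_factors_iff {V : Type*} [Fintype V] [DecidableEq V]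
    (G : SimpleGraph V) [DecidableRel G.Adj] (g f : V → ℕ) (hgf : ∀ x, g x ≤ f x) :
    HasAllFracFactors G g f ↔
      ∀ S : Finset V,
        0 ≤ (∑ v ∈ S, (g v : ℤ)) - (∑ v ∈ Tset G f S, (f v : ℤ)) +
            ∑ v ∈ Tset G f S, (dOut G S v : ℤ) := by
  classical
  constructor
  · -- necessity
    intro hAll S
    set q : V → ℕ := fun v => if v ∈ S then g v else f v with hq
    have hq1 : ∀ v, g v ≤ q v := fun v => by
      rw [hq]; dsimp only; split_ifs with h
      · exact le_rfl
      · exact hgf v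
    have hq2 : ∀ v, q v ≤ f v := fun v => by
      rw [hq]; dsimp only; split_ifs with h
      · exact hgf v
      · exact le_rfl
    obtain ⟨h, hb, hdeg⟩ := hAll q hq1 hq2
    have hTS : ∀ v ∈ Tset G f S, v ∉ S := fun v hv =>
      Finset.mem_compl.1 (Finset.mem_filter.1 hv).1
    have hbe : ∀ a b : V, G.Adj a b → 0 ≤ h s(a, b) ∧ h s(a, b) ≤ 1 := fun a b hab =>
      hb _ (SimpleGraph.mem_edgeFinset.2 ((SimpleGraph.mem_edgeSet G).2 hab))
    -- f(T) ≤ degree sums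
    have e1 : ∑ v ∈ Tset G f S, (f v : ℝ)
        ≤ ∑ v ∈ Tset G f S, ∑ w ∈ G.neighborFinset v, h s(v, w) := by
      refine Finset.sum_le_sum fun v hv => ?_
      have h1 := (hdeg v).1
      have hqv : q v = f v := by rw [hq]; exact if_neg (hTS v hv)
      rw [hqv] at h1
      rwa [sum_incidence G h v] at h1
    have e2 : ∀ v ∈ Tset G f S, ∑ w ∈ G.neighborFinset v, h s(v, w)
        = ∑ w ∈ G.neighborFinset v ∩ S, h s(v, w)
          + ∑ w ∈ G.neighborFinset v \ S, h s(v, w) := fun v _ =>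
      (Finset.sum_inter_add_sum_sdiff _ _ _).symm
    -- outside part
    have e3 : ∀ v ∈ Tset G f S, ∑ w ∈ G.neighborFinset v \ S, h s(v, w)
        ≤ (dOut G S v : ℝ) := by
      intro v hv
      have := Finset.sum_le_card_nsmul (G.neighborFinset v \ S) (fun w => h s(v, w)) 1
        (fun w hw => (hbe v w ((SimpleGraph.mem_neighborFinset _ _ _).1
          (Finset.mem_sdiff.1 hw).1)).2)
      simpa [dOut, nsmul_eq_mul] using this
    -- inside part, reindexed to S
    have e4 : ∑ v ∈ Tset G f S, ∑ w ∈ G.neighborFinset v ∩ S, h s(v, w)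
        ≤ ∑ w ∈ S, (g w : ℝ) := by
      have r1 : ∑ v ∈ Tset G f S, ∑ w ∈ G.neighborFinset v ∩ S, h s(v, w)
          = ∑ p ∈ (Tset G f S).sigma (fun v => G.neighborFinset v ∩ S), h s(p.1, p.2) :=
        (Finset.sum_sigma (Tset G f S) (fun v => G.neighborFinset v ∩ S)
          (fun p => h s(p.1, p.2))).symm
      have r2 : ∑ p ∈ (Tset G f S).sigma (fun v => G.neighborFinset v ∩ S), h s(p.1, p.2)
          = ∑ p ∈ S.sigma (fun w => G.neighborFinset w ∩ Tset G f S), h s(p.1, p.2) := by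
        refine Finset.sum_nbij' (fun p => ⟨p.2, p.1⟩) (fun p => ⟨p.2, p.1⟩) ?_ ?_ ?_ ?_ ?_
        · intro p hp
          obtain ⟨h1, h2⟩ := Finset.mem_sigma.1 hp
          obtain ⟨h3, h4⟩ := Finset.mem_inter.1 h2
          refine Finset.mem_sigma.2 ⟨h4, Finset.mem_inter.2 ⟨?_, h1⟩⟩
          exact (SimpleGraph.mem_neighborFinset _ _ _).2
            ((SimpleGraph.mem_neighborFinset _ _ _).1 h3).symm
        · intro p hp
          obtain ⟨h1, h2⟩ := Finset.mem_sigma.1 hp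
          obtain ⟨h3, h4⟩ := Finset.mem_inter.1 h2
          refine Finset.mem_sigma.2 ⟨h4, Finset.mem_inter.2 ⟨?_, h1⟩⟩
          exact (SimpleGraph.mem_neighborFinset _ _ _).2
            ((SimpleGraph.mem_neighborFinset _ _ _).1 h3).symm
        · intro p _; rfl
        · intro p _; rfl
        · intro p _
          rw [Sym2.eq_swap]
      have r3 : ∑ p ∈ S.sigma (fun w => G.neighborFinset w ∩ Tset G f S), h s(p.1, p.2)
          = ∑ w ∈ S, ∑ v ∈ G.neighborFinset w ∩ Tset G f S, h s(w, v) :=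
        Finset.sum_sigma S (fun w => G.neighborFinset w ∩ Tset G f S)
          (fun p => h s(p.1, p.2))
      have r4 : ∑ w ∈ S, ∑ v ∈ G.neighborFinset w ∩ Tset G f S, h s(w, v)
          ≤ ∑ w ∈ S, (g w : ℝ) := by
        refine Finset.sum_le_sum fun w hw => ?_
        have s1 : ∑ v ∈ G.neighborFinset w ∩ Tset G f S, h s(w, v)
            ≤ ∑ v ∈ G.neighborFinset w, h s(w, v) := by
          refine Finset.sum_le_sum_of_subset_of_nonneg Finset.inter_subset_left ?_
          intro v hv _
          exact (hbe w v ((SimpleGraph.mem_neighborFinset _ _ _).1 hv)).1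
        have s2 : ∑ v ∈ G.neighborFinset w, h s(w, v) ≤ (q w : ℝ) := by
          rw [← sum_incidence G h w]
          exact (hdeg w).2
        have s3 : q w = g w := by rw [hq]; exact if_pos hw
        rw [s3] at s2
        linarith
      rw [r1, r2, r3]
      exact r4
    have key : ∑ v ∈ Tset G f S, (f v : ℝ)
        ≤ ∑ v ∈ Tset G f S, (dOut G S v : ℝ) + ∑ w ∈ S, (g w : ℝ) := by
      have e5 : ∑ v ∈ Tset G f S, ∑ w ∈ G.neighborFinset v, h s(v, w)
          = ∑ v ∈ Tset G f S, ∑ w ∈ G.neighborFinset v ∩ S, h s(v, w)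
            + ∑ v ∈ Tset G f S, ∑ w ∈ G.neighborFinset v \ S, h s(v, w) := by
        rw [← Finset.sum_add_distrib]
        exact Finset.sum_congr rfl e2
      have e6 : ∑ v ∈ Tset G f S, ∑ w ∈ G.neighborFinset v \ S, h s(v, w)
          ≤ ∑ v ∈ Tset G f S, (dOut G S v : ℝ) := Finset.sum_le_sum e3
      linarith
    have hR : (0 : ℝ) ≤ (∑ v ∈ S, (g v : ℝ)) - (∑ v ∈ Tset G f S, (f v : ℝ))
        + ∑ v ∈ Tset G f S, (dOut G S v : ℝ) := by linarith
    exact_mod_cast hR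
  · -- sufficiency
    intro hcond q hgq hqf
    refine exists_factor_of_condC G q (condC_of_condA G q ?_)
    intro S
    have h0 := hcond S
    have hsub : Sᶜ.filter (fun v => dOut G S v < q v) ⊆ Tset G f S := by
      intro v hv
      obtain ⟨h1, h2⟩ := Finset.mem_filter.1 hv
      exact Finset.mem_filter.2 ⟨h1, lt_of_lt_of_le h2 (hqf v)⟩
    have h1 : ∑ v ∈ Sᶜ.filter (fun v => dOut G S v < q v), ((q v : ℤ) - dOut G S v)
        ≤ ∑ v ∈ Tset G f S, ((f v : ℤ) - dOut G S v) := by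
      calc ∑ v ∈ Sᶜ.filter (fun v => dOut G S v < q v), ((q v : ℤ) - dOut G S v)
          ≤ ∑ v ∈ Sᶜ.filter (fun v => dOut G S v < q v), ((f v : ℤ) - dOut G S v) := by
            refine Finset.sum_le_sum fun v _ => ?_
            have := hqf v
            omega
        _ ≤ ∑ v ∈ Tset G f S, ((f v : ℤ) - dOut G S v) := by
            refine Finset.sum_le_sum_of_subset_of_nonneg hsub fun v hv _ => ?_
            have := (Finset.mem_filter.1 hv).2
            omega
    have h2 : ∑ v ∈ Tset G f S, ((f v : ℤ) - dOut G S v)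
        = (∑ v ∈ Tset G f S, (f v : ℤ)) - ∑ v ∈ Tset G f S, (dOut G S v : ℤ) :=
      Finset.sum_sub_distrib _ _
    have h3 : ∑ v ∈ S, (g v : ℤ) ≤ ∑ v ∈ S, (q v : ℤ) :=
      Finset.sum_le_sum fun v _ => by exact_mod_cast hgq v
    linarith
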